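/- For nonnegative integers n, m, m', l, y, x, r with x ≤ min(y, m') and real θ > 0, the r-th falling factorial moment of the conditional distribution of R̃_{l,n,m'} given R_{l,n,m} = y equals Σ_{s=0}^{r} C(r,s)·(-1)^s·(y-s)^{[r-s]}·s!·C(y,s)·(θ+n+m-s(1+l))^{(m')}/(θ+n+m)^{(m')}, where the conditional distribution is P(R̃_{l,n,m'}=x | R_{l,n,m}=y) = (C(y,x)/(θ+n+m)^{(m')})·Σ_{i=y-x}^{y} (-1)^{i-(y-x)}·C(x, y-i)·(θ+n+m-i(1+l))^{(m')}. -/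

import Mathlib

open Finset

/-- Rising factorial `a^{(k)} = a(a+1)⋯(a+k-1)`. -/
noncomputable def rise (a : ℝ) (k : ℕ) : ℝ := ∏ i ∈ Finset.range k, (a + i)

/-- Falling factorial `a^{[k]} = a(a-1)⋯(a-k+1)`. -/
noncomputable def fall (a : ℝ) (k : ℕ) : ℝ := ∏ i ∈ Finset.range k, (a - i)

lemma fall_nat_eq (y s : ℕ) : fall (y : ℝ) s = (y.descFactorial s : ℝ) := by
  induction s with
  | zero => simp [fall]
  | succ s ih =>
    rw [fall, Finset.prod_range_succ, ← fall, ih, Nat.descFactorial_succ]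
    rcases le_or_gt s y with h | h
    · push_cast [h]; ring
    · rw [Nat.descFactorial_of_lt (by omega), Nat.sub_eq_zero_of_le (by omega)]
      simp

lemma fall_add (a : ℝ) (s t : ℕ) : fall a (s + t) = fall a s * fall (a - s) t := by
  simp only [fall, Finset.prod_range_add]
  congr 1
  refine Finset.prod_congr rfl fun i _ => ?_
  push_cast; ring

lemma fall_nat_lt {x r : ℕ} (h : x < r) : fall (x : ℝ) r = 0 :=
  Finset.prod_eq_zero (Finset.mem_range.mpr h) (by simp)

open Polynomial in
lemma fwdDiff_iter_poly_zero (x : ℕ) : ∀ p : Polynomial ℝ, p.degree < x →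
    (fwdDiff (1 : ℕ) (G := ℝ))^[x] (fun j : ℕ => p.eval (j : ℝ)) = fun _ => (0 : ℝ) := by
  induction x with
  | zero =>
    intro p hp
    have hp' : p.degree < 0 := by exact_mod_cast hp
    have : p = 0 := Polynomial.degree_eq_bot.mp (Nat.WithBot.lt_zero_iff.mp hp')
    subst this
    funext j; simp
  | succ x ih =>
    intro p hp
    rw [Function.iterate_succ_apply]
    have hdiff : fwdDiff 1 (fun j : ℕ => p.eval (j : ℝ))
        = fun j : ℕ => (p.comp (X + C 1) - p).eval (j : ℝ) := by
      funext j
      simp [fwdDiff, Polynomial.eval_comp]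
    rw [hdiff]
    refine ih _ ?_
    rcases eq_or_ne p 0 with rfl | hp0
    · simp only [Polynomial.zero_comp, sub_zero, Polynomial.degree_zero]
      exact WithBot.bot_lt_coe x
    · have hmon : (X + C (1:ℝ)).Monic := Polynomial.monic_X_add_C 1
      have hcomp_lc : (p.comp (X + C 1)).leadingCoeff = p.leadingCoeff := by
        rw [Polynomial.leadingCoeff_comp (by rw [Polynomial.natDegree_X_add_C]; omega)]
        rw [hmon.leadingCoeff, one_pow, mul_one]
      have hcomp_ne : p.comp (X + C 1) ≠ 0 := by
        intro h
        apply hp0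
        rw [← Polynomial.leadingCoeff_eq_zero, ← hcomp_lc, h, Polynomial.leadingCoeff_zero]
      have hdeg : (p.comp (X + C 1)).degree = p.degree := by
        rw [Polynomial.degree_eq_natDegree hcomp_ne, Polynomial.degree_eq_natDegree hp0,
          Polynomial.natDegree_comp, Polynomial.natDegree_X_add_C, mul_one]
      have h1 : (p.comp (X + C 1) - p).degree < p.degree := by
        rw [← hdeg]
        exact Polynomial.degree_sub_lt hdeg hcomp_ne hcomp_lc
      have h2 : p.degree ≤ (x : WithBot ℕ) := by
        rw [Polynomial.degree_eq_natDegree hp0] at hp ⊢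
        exact_mod_cast Nat.lt_succ_iff.mp (by exact_mod_cast hp)
      exact lt_of_lt_of_le h1 h2

open Polynomial in
lemma exists_poly (a d : ℝ) (k : ℕ) : ∃ p : Polynomial ℝ, p.degree ≤ k ∧
    ∀ j : ℕ, p.eval (j : ℝ) = rise (a + j * d) k := by
  refine ⟨∏ i ∈ Finset.range k, (C (a + i) + C d * X), ?_, ?_⟩
  · refine le_trans (Polynomial.degree_prod_le _ _) ?_
    refine le_trans (Finset.sum_le_sum (fun i _ => ?_)) (by simp : ∑ _i ∈ Finset.range k, (1 : WithBot ℕ) ≤ k)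
    refine le_trans (Polynomial.degree_add_le _ _) ?_
    refine max_le (le_trans Polynomial.degree_C_le (by norm_num)) ?_
    refine le_trans (Polynomial.degree_mul_le _ _) ?_
    calc (C d).degree + (X : ℝ[X]).degree ≤ 0 + 1 :=
          add_le_add Polynomial.degree_C_le Polynomial.degree_X_le
      _ = 1 := by norm_num
  · intro j
    rw [Polynomial.eval_prod, rise]
    refine Finset.prod_congr rfl fun i _ => ?_
    simp
    ring

lemma key_coeff (y r t : ℕ) (hry : r ≤ y) :
    fall ((r + t : ℕ) : ℝ) r * (y.choose (r + t) : ℝ)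
      = fall (y : ℝ) r * ((y - r).choose t : ℝ) := by
  rw [fall_nat_eq, fall_nat_eq, ← Nat.cast_mul, ← Nat.cast_mul]
  congr 1
  rw [Nat.descFactorial_eq_factorial_mul_choose, Nat.descFactorial_eq_factorial_mul_choose]
  rcases le_or_gt (r + t) y with h | h
  · rw [mul_assoc, mul_assoc]
    congr 1
    rw [mul_comm ((r + t).choose r), Nat.choose_mul (Nat.le_add_right r t),
      Nat.add_sub_cancel_left]
  · rw [Nat.choose_eq_zero_of_lt h, Nat.choose_eq_zero_of_lt (show y - r < t by omega)]
    ring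

theorem stmt_11 (n m m' l y r : ℕ) (hl : 1 ≤ l) (θ : ℝ) (hθ : 0 < θ) :
    ∑ x ∈ Finset.range (min y m' + 1),
      fall (x : ℝ) r *
        ((y.choose x : ℝ) / rise (θ + n + m) m' *
          ∑ i ∈ Finset.Icc (y - x) y,
            (-1 : ℝ) ^ (i - (y - x)) * (x.choose (y - i) : ℝ) *
              rise (θ + n + m - i * (1 + l)) m')
    = ∑ s ∈ Finset.range (r + 1),
        (r.choose s : ℝ) * (-1 : ℝ) ^ s * fall ((y : ℝ) - s) (r - s) *
          (s.factorial : ℝ) * (y.choose s) *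
          rise (θ + n + m - s * (1 + l)) m' / rise (θ + n + m) m' := by
  set c : ℝ := θ + n + m with hc
  set d : ℝ := 1 + l with hd
  rcases lt_or_ge y r with hyr | hry
  -- Case y < r : both sides vanish
  · rw [Finset.sum_eq_zero, Finset.sum_eq_zero]
    · intro s hs
      simp only [Finset.mem_range] at hs
      rcases le_or_gt s y with h | h
      · have h1 : ((y : ℝ) - s) = ((y - s : ℕ) : ℝ) := by push_cast [h]; ring
        rw [h1, fall_nat_lt (show y - s < r - s by omega)]
        ring
      · rw [Nat.choose_eq_zero_of_lt h]
        push_cast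
        ring
    · intro x hx
      simp only [Finset.mem_range] at hx
      rw [fall_nat_lt (show x < r by omega)]
      ring
  -- Case r ≤ y
  · set g : ℕ → ℝ := fun j => rise (c - y * d + j * d) m' with hg
    obtain ⟨p, hpdeg, hpev⟩ := exists_poly (c - y * d) d m'
    have hgp : g = fun j : ℕ => p.eval (j : ℝ) := funext fun j => (hpev j).symm
    have hgzero : ∀ x : ℕ, m' < x → (fwdDiff (1 : ℕ))^[x] g 0 = 0 := by
      intro x hx
      rw [hgp, fwdDiff_iter_poly_zero x p (lt_of_le_of_lt hpdeg (by exact_mod_cast hx))]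
    have hinner : ∀ x : ℕ, x ≤ y →
        (∑ i ∈ Finset.Icc (y - x) y, (-1 : ℝ) ^ (i - (y - x)) * (x.choose (y - i) : ℝ) *
          rise (c - i * d) m') = (fwdDiff (1 : ℕ))^[x] g 0 := by
      intro x hxy
      rw [fwdDiff_iter_eq_sum_shift]
      refine Finset.sum_nbij' (fun i => y - i) (fun k => y - k) ?_ ?_ ?_ ?_ ?_
      · intro a ha
        simp only [Finset.mem_Icc] at ha
        simp only [Finset.mem_range]
        omega
      · intro a ha
        simp only [Finset.mem_range] at ha
        simp only [Finset.mem_Icc]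
        omega
      · intro a ha
        simp only [Finset.mem_Icc] at ha
        show y - (y - a) = a
        omega
      · intro a ha
        simp only [Finset.mem_range] at ha
        show y - (y - a) = a
        omega
      · intro i hi
        simp only [Finset.mem_Icc] at hi
        have h1 : i - (y - x) = x - (y - i) := by omega
        have h2 : (0 : ℕ) + (y - i) • 1 = y - i := by simp
        rw [h1, h2]
        have h3 : c - (y : ℝ) * d + ((y - i : ℕ) : ℝ) * d = c - i * d := by
          have h4 : ((y - i : ℕ) : ℝ) = (y : ℝ) - i := by push_cast [hi.2]; ring
          rw [h4]; ring
        simp only [hg, zsmul_eq_mul, h3]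
        push_cast
        ring
    -- rewrite LHS
    have step1 : (∑ x ∈ Finset.range (min y m' + 1),
        fall (x : ℝ) r * ((y.choose x : ℝ) / rise c m' *
          ∑ i ∈ Finset.Icc (y - x) y, (-1 : ℝ) ^ (i - (y - x)) * (x.choose (y - i) : ℝ) *
            rise (c - i * d) m'))
        = ∑ x ∈ Finset.range (y + 1),
            fall (x : ℝ) r * (y.choose x : ℝ) * (fwdDiff (1 : ℕ))^[x] g 0 * (rise c m')⁻¹ := by
      rw [Finset.sum_subset (Finset.range_subset_range.mpr (show min y m' + 1 ≤ y + 1 by omega))]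
      · refine Finset.sum_congr rfl fun x hx => ?_
        simp only [Finset.mem_range] at hx
        rw [← hinner x (by omega)]
        ring
      · intro x hx1 hx2
        simp only [Finset.mem_range] at hx1 hx2
        rw [hinner x (by omega), hgzero x (by omega)]
        ring
    rw [step1]
    -- pull out the inverse
    rw [← Finset.sum_mul]
    -- rewrite RHS
    have step2 : (∑ s ∈ Finset.range (r + 1),
        (r.choose s : ℝ) * (-1 : ℝ) ^ s * fall ((y : ℝ) - s) (r - s) *
          (s.factorial : ℝ) * (y.choose s) * rise (c - s * d) m' / rise c m')
        = (∑ s ∈ Finset.range (r + 1),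
            fall (y : ℝ) r * ((-1 : ℝ) ^ s * (r.choose s : ℝ) * rise (c - s * d) m')) *
          (rise c m')⁻¹ := by
      simp only [div_eq_mul_inv]
      rw [← Finset.sum_mul]
      congr 1
      refine Finset.sum_congr rfl fun s hs => ?_
      simp only [Finset.mem_range] at hs
      have hsr : s ≤ r := by omega
      have hsy : s ≤ y := le_trans hsr hry
      have h1 : ((y : ℝ) - s) = ((y - s : ℕ) : ℝ) := by push_cast [hsy]; ring
      have h2 : (s.factorial : ℝ) * (y.choose s : ℝ) = fall (y : ℝ) s := by
        rw [fall_nat_eq, Nat.descFactorial_eq_factorial_mul_choose]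
        push_cast
        ring
      have h3 : fall (y : ℝ) r = fall (y : ℝ) s * fall ((y : ℝ) - s) (r - s) := by
        rw [← fall_add, Nat.add_sub_cancel' hsr]
      rw [h1] at h3 ⊢
      rw [h3, ← h2]
      ring
    rw [step2]
    congr 1
    -- now the core sum identity
    have hsplit : y + 1 = r + (y - r + 1) := by omega
    rw [hsplit, Finset.sum_range_add, Finset.sum_eq_zero (fun x hx => by
      simp only [Finset.mem_range] at hx
      rw [fall_nat_lt hx]; ring), zero_add]
    have step3 : ∀ t ∈ Finset.range (y - r + 1),
        fall ((r + t : ℕ) : ℝ) r * ((y.choose (r + t)) : ℝ) * (fwdDiff (1 : ℕ))^[r + t] g 0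
          = fall (y : ℝ) r * (((y - r).choose t : ℝ) * (fwdDiff (1 : ℕ))^[t] ((fwdDiff (1 : ℕ))^[r] g) 0) := by
      intro t ht
      rw [show (fwdDiff (1 : ℕ))^[r + t] g 0
            = (fwdDiff (1 : ℕ))^[t] ((fwdDiff (1 : ℕ))^[r] g) 0 by
          rw [add_comm r t, Function.iterate_add_apply]]
      rw [key_coeff y r t hry]
      ring
    rw [Finset.sum_congr rfl step3, ← Finset.mul_sum]
    congr 1
    have step4 : (∑ t ∈ Finset.range (y - r + 1),
        ((y - r).choose t : ℝ) * (fwdDiff (1 : ℕ))^[t] ((fwdDiff (1 : ℕ))^[r] g) 0)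
        = ((fwdDiff (1 : ℕ))^[r] g) (0 + (y - r) • 1) := by
      rw [shift_eq_sum_fwdDiff_iter (h := (1 : ℕ)) ((fwdDiff (1 : ℕ))^[r] g) (y - r) 0]
      refine Finset.sum_congr rfl fun t ht => ?_
      rw [nsmul_eq_mul]
    rw [step4, fwdDiff_iter_eq_sum_shift]
    have step5 : ∀ k ∈ Finset.range (r + 1),
        ((-1 : ℤ) ^ (r - k) * (r.choose k : ℤ)) • g (0 + (y - r) • 1 + k • 1)
          = (-1 : ℝ) ^ (r - k) * ((r.choose (r - k)) : ℝ) * rise (c - ((r - k : ℕ) : ℝ) * d) m' := by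
      intro k hk
      simp only [Finset.mem_range] at hk
      have hkr : k ≤ r := by omega
      have harg : (0 : ℕ) + (y - r) • 1 + k • 1 = y - r + k := by simp
      have hval : c - (y : ℝ) * d + ((y - r + k : ℕ) : ℝ) * d = c - ((r - k : ℕ) : ℝ) * d := by
        push_cast [hry, hkr]
        ring
      rw [harg]
      simp only [hg, zsmul_eq_mul, hval, Nat.choose_symm hkr]
      push_cast
      ring
    rw [Finset.sum_congr rfl step5, Finset.mul_sum]
    rw [← Finset.sum_range_reflect (fun s => fall (y : ℝ) r * ((-1 : ℝ) ^ s * (r.choose s : ℝ) *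
      rise (c - (s : ℝ) * d) m')) (r + 1)]
    refine Finset.sum_congr rfl fun k hk => ?_
    simp only [Finset.mem_range] at hk
    have hidx : r + 1 - 1 - k = r - k := by omega
    rw [hidx]
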